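/- Suppose C is an (r,δ)-LRC of length n, S ⊆ [n], and Δ is a positive integer with Δ ≤ |S|. Then there exist subsets A, T ⊆ [n] such that A ⊆ S ∩ T, |A| = (δ-1)·⌊Δ/(r+δ-1)⌋, |S ∩ T| ≤ Δ, and every codeword restricted to T is determined by its restriction to T\A (i.e., the projection C|_T → C|_{T\A} is injective, so C|_T can be generated by C|_{T\A}). -/

import Mathlib

private lemma ceil_step (δ N : ℕ) (hδ : 2 ≤ δ) (hN : 1 ≤ N) :
    (N - min (δ - 1) N + δ - 2) / (δ - 1) + 1 ≤ (N + δ - 2) / (δ - 1) := by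
  rcases le_or_gt N (δ - 1) with h | h
  · have h2 : N - min (δ - 1) N + δ - 2 = δ - 2 := by omega
    rw [h2, Nat.div_eq_of_lt (by omega)]
    have h3 : 1 ≤ (N + δ - 2) / (δ - 1) := (Nat.one_le_div_iff (by omega)).mpr (by omega)
    simpa using h3
  · have h2 : N - min (δ - 1) N + δ - 2 = N - 1 := by omega
    have h3 : N + δ - 2 = (N - 1) + (δ - 1) := by omega
    rw [h2, h3, Nat.add_div_right _ (by omega : 0 < δ - 1)]

private theorem aux_lrc {F : Type*} [Field F] [Fintype F] [DecidableEq F]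
    {n r δ ℓ : ℕ} (hr : 1 ≤ r) (hδ : 2 ≤ δ)
    (C : Submodule F (Fin n → F))
    (S' : Fin ℓ → Finset (Fin n))
    (hcover : ∀ i : Fin n, ∃ j, i ∈ S' j)
    (hcard : ∀ j, (S' j).card ≤ r + δ - 1)
    (hloc : ∀ j, ∀ c ∈ C, (∃ i ∈ S' j, c i ≠ 0) →
        δ ≤ ((S' j).filter fun i => c i ≠ 0).card)
    (S : Finset (Fin n)) (Δ : ℕ) (hΔS : Δ ≤ S.card) :
    ∀ N A T, A ⊆ S ∩ T →
      (∀ c₁ ∈ C, ∀ c₂ ∈ C, (∀ i ∈ T \ A, c₁ i = c₂ i) → ∀ i ∈ T, c₁ i = c₂ i) →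
      (S ∩ T).card + N + r * ((N + δ - 2) / (δ - 1)) ≤ Δ →
      ∃ A' T', A ⊆ A' ∧ A' ⊆ S ∩ T' ∧ A'.card = A.card + N ∧ (S ∩ T').card ≤ Δ ∧
        ∀ c₁ ∈ C, ∀ c₂ ∈ C, (∀ i ∈ T' \ A', c₁ i = c₂ i) → ∀ i ∈ T', c₁ i = c₂ i := by
  intro N
  induction N using Nat.strong_induction_on with
  | _ N ih =>
  intro A T hA hR hH
  rcases Nat.eq_zero_or_pos N with h0 | hN1
  · subst h0
    refine ⟨A, T, Finset.Subset.refl A, hA, by omega, ?_, hR⟩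
    have hd0 : (0 + δ - 2) / (δ - 1) = 0 := Nat.div_eq_of_lt (by omega)
    rw [hd0] at hH
    omega
  · -- one greedy step
    have hH1 : (S ∩ T).card + N ≤ Δ := le_trans (Nat.le_add_right _ _) hH
    have hcardlt : (S ∩ T).card < Δ := by omega
    have hex : ∃ s, s ∈ S ∧ s ∉ T := by
      have hne : ¬ S ⊆ S ∩ T := fun hsub => by
        have := Finset.card_le_card hsub
        omega
      rw [Finset.not_subset] at hne
      obtain ⟨s, hsS, hs2⟩ := hne
      exact ⟨s, hsS, fun hT => hs2 (Finset.mem_inter.mpr ⟨hsS, hT⟩)⟩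
    obtain ⟨s, hsS, hsT⟩ := hex
    obtain ⟨j, hsj⟩ := hcover s
    set P : Finset (Fin n) := (S ∩ S' j) \ T with hP
    have hsP : s ∈ P := by
      rw [hP, Finset.mem_sdiff, Finset.mem_inter]
      exact ⟨⟨hsS, hsj⟩, hsT⟩
    have haP : 1 ≤ P.card := Finset.card_pos.mpr ⟨s, hsP⟩
    set g : ℕ := min (δ - 1) (min P.card N) with hg
    have hg1 : 1 ≤ g := by omega
    obtain ⟨At, hAtP, hAtcard⟩ := Finset.exists_subset_card_eq (s := P) (n := g) (by omega)
    obtain ⟨L, hLsub, hLcard⟩ := Finset.exists_subset_card_eq (s := P \ At)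
      (n := min (δ - 1 - g) (P.card - g))
      (by rw [Finset.card_sdiff_of_subset hAtP, hAtcard]; omega)
    have hLP : L ⊆ P := hLsub.trans Finset.sdiff_subset
    have hLAt : ∀ x ∈ L, x ∉ At := fun x hx => (Finset.mem_sdiff.mp (hLsub hx)).2
    set Tn : Finset (Fin n) := T ∪ (S' j \ L) with hTn
    set An : Finset (Fin n) := A ∪ At with hAn
    have hAT : ∀ x ∈ A, x ∈ T := fun x hx => (Finset.mem_inter.mp (hA hx)).2
    have hASm : ∀ x ∈ A, x ∈ S := fun x hx => (Finset.mem_inter.mp (hA hx)).1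
    have hAtT : ∀ x ∈ At, x ∉ T := fun x hx => (Finset.mem_sdiff.mp (hAtP hx)).2
    have hAtS : ∀ x ∈ At, x ∈ S := fun x hx =>
      (Finset.mem_inter.mp (Finset.mem_sdiff.mp (hAtP hx)).1).1
    have hAtj : ∀ x ∈ At, x ∈ S' j := fun x hx =>
      (Finset.mem_inter.mp (Finset.mem_sdiff.mp (hAtP hx)).1).2
    have hAnS : An ⊆ S ∩ Tn := by
      intro x hx
      rcases Finset.mem_union.mp hx with h | h
      · exact Finset.mem_inter.mpr ⟨hASm x h, Finset.mem_union_left _ (hAT x h)⟩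
      · refine Finset.mem_inter.mpr ⟨hAtS x h, Finset.mem_union_right _ ?_⟩
        exact Finset.mem_sdiff.mpr ⟨hAtj x h, fun hxL => hLAt x hxL h⟩
    have hdisj : Disjoint A At :=
      Finset.disjoint_left.mpr fun x hx hx' => hAtT x hx' (hAT x hx)
    have hAncard : An.card = A.card + g := by
      rw [hAn, Finset.card_union_of_disjoint hdisj, hAtcard]
    -- the recovery property for the new pair
    have hRn : ∀ c₁ ∈ C, ∀ c₂ ∈ C, (∀ i ∈ Tn \ An, c₁ i = c₂ i) → ∀ i ∈ Tn, c₁ i = c₂ i := by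
      intro c₁ hc₁ c₂ hc₂ hag
      have hT : ∀ i ∈ T, c₁ i = c₂ i := by
        refine hR c₁ hc₁ c₂ hc₂ ?_
        intro i hi
        rw [Finset.mem_sdiff] at hi
        refine hag i ?_
        rw [Finset.mem_sdiff]
        refine ⟨Finset.mem_union_left _ hi.1, ?_⟩
        intro hiAn
        rcases Finset.mem_union.mp hiAn with h | h
        · exact hi.2 h
        · exact hAtT i h hi.1
      have hSj : ∀ x ∈ S' j, c₁ x = c₂ x := by
        by_contra hcon
        push_neg at hcon
        obtain ⟨x, hxj, hxne⟩ := hcon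
        have hmem : c₁ - c₂ ∈ C := sub_mem hc₁ hc₂
        have hδle := hloc j (c₁ - c₂) hmem ⟨x, hxj, by simpa [sub_ne_zero] using hxne⟩
        have hsub : ((S' j).filter fun i => (c₁ - c₂) i ≠ 0) ⊆ L ∪ At := by
          intro y hy
          rw [Finset.mem_filter] at hy
          obtain ⟨hyj, hyne⟩ := hy
          have hyne' : c₁ y ≠ c₂ y := by simpa [sub_ne_zero] using hyne
          have hyT : y ∉ T := fun h => hyne' (hT y h)
          by_cases hyL : y ∈ L
          · exact Finset.mem_union_left _ hyL
          · have hyTn : y ∈ Tn :=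
              Finset.mem_union_right _ (Finset.mem_sdiff.mpr ⟨hyj, hyL⟩)
            have hyAn : y ∈ An := by
              by_contra hyAn
              exact hyne' (hag y (Finset.mem_sdiff.mpr ⟨hyTn, hyAn⟩))
            rcases Finset.mem_union.mp hyAn with h | h
            · exact absurd (hAT y h) hyT
            · exact Finset.mem_union_right _ h
        have hcard2 : ((S' j).filter fun i => (c₁ - c₂) i ≠ 0).card ≤ L.card + At.card :=
          le_trans (Finset.card_le_card hsub) (Finset.card_union_le _ _)
        omega
      intro i hi
      rcases Finset.mem_union.mp hi with h | h
      · exact hT i h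
      · exact hSj i (Finset.mem_sdiff.mp h).1
    -- cardinal accounting
    have hpaysub : S ∩ Tn ⊆ (S ∩ T) ∪ (P \ L) := by
      intro x hx
      rw [Finset.mem_inter] at hx
      obtain ⟨hxS, hxTn⟩ := hx
      rcases Finset.mem_union.mp hxTn with h | h
      · exact Finset.mem_union_left _ (Finset.mem_inter.mpr ⟨hxS, h⟩)
      · rw [Finset.mem_sdiff] at h
        by_cases hxT : x ∈ T
        · exact Finset.mem_union_left _ (Finset.mem_inter.mpr ⟨hxS, hxT⟩)
        · refine Finset.mem_union_right _ (Finset.mem_sdiff.mpr ⟨?_, h.2⟩)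
          exact Finset.mem_sdiff.mpr ⟨Finset.mem_inter.mpr ⟨hxS, h.1⟩, hxT⟩
    have hpay : (S ∩ Tn).card ≤ (S ∩ T).card + (P.card - L.card) := by
      refine le_trans (Finset.card_le_card hpaysub) (le_trans (Finset.card_union_le _ _) ?_)
      rw [Finset.card_sdiff_of_subset hLP]
    have hPr : P.card ≤ r + δ - 1 :=
      le_trans (Finset.card_le_card (Finset.sdiff_subset.trans Finset.inter_subset_right))
        (hcard j)
    have hDmono : (N - g + δ - 2) / (δ - 1) ≤ (N + δ - 2) / (δ - 1) :=
      Nat.div_le_div_right (by omega)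
    have hH2 : (S ∩ Tn).card + (N - g) + r * ((N - g + δ - 2) / (δ - 1)) ≤ Δ := by
      rcases le_or_gt (δ - 1) P.card with hc | hc
      · -- "full" set: pay ≤ g + r, but the ceiling drops by one
        have hkey : (N - g + δ - 2) / (δ - 1) + 1 ≤ (N + δ - 2) / (δ - 1) := by
          have h := ceil_step δ N hδ hN1
          have heq : N - min (δ - 1) N + δ - 2 = N - g + δ - 2 := by omega
          rw [heq] at h
          exact h
        have hpayb : P.card - L.card ≤ g + r := by omega
        have hmul : r * ((N - g + δ - 2) / (δ - 1)) + r ≤ r * ((N + δ - 2) / (δ - 1)) := by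
          calc r * ((N - g + δ - 2) / (δ - 1)) + r
              = r * ((N - g + δ - 2) / (δ - 1) + 1) := by ring
            _ ≤ r * ((N + δ - 2) / (δ - 1)) := Nat.mul_le_mul_left r hkey
        obtain ⟨q1, hq1⟩ : ∃ q, r * ((N - g + δ - 2) / (δ - 1)) = q := ⟨_, rfl⟩
        obtain ⟨q2, hq2⟩ : ∃ q, r * ((N + δ - 2) / (δ - 1)) = q := ⟨_, rfl⟩
        rw [hq1, hq2] at hmul
        rw [hq2] at hH
        rw [hq1]
        omega
      · -- "partial" set: pay ≤ g
        have hpayb : P.card - L.card ≤ g := by omega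
        have hmul : r * ((N - g + δ - 2) / (δ - 1)) ≤ r * ((N + δ - 2) / (δ - 1)) :=
          Nat.mul_le_mul_left r hDmono
        obtain ⟨q1, hq1⟩ : ∃ q, r * ((N - g + δ - 2) / (δ - 1)) = q := ⟨_, rfl⟩
        obtain ⟨q2, hq2⟩ : ∃ q, r * ((N + δ - 2) / (δ - 1)) = q := ⟨_, rfl⟩
        rw [hq1, hq2] at hmul
        rw [hq2] at hH
        rw [hq1]
        omega
    obtain ⟨A', T', hAA', hA'S, hA'card, hT'card, hR'⟩ :=
      ih (N - g) (by omega) An Tn hAnS hRn hH2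
    refine ⟨A', T', Finset.subset_union_left.trans hAA', hA'S, ?_, hT'card, hR'⟩
    rw [hA'card, hAncard]
    omega

/-- Lemma (A, T): for an `(r,δ)`-LRC `C` of length `n` (with recovery-set cover
`S'_1, …, S'_ℓ`), any `S ⊆ [n]` and any positive `Δ ≤ |S|`, there exist `A, T ⊆ [n]`
with `A ⊆ S ∩ T`, `|A| = (δ-1)·⌊Δ/(r+δ-1)⌋`, `|S ∩ T| ≤ Δ`, and such that every codeword
restricted to `T` is determined by its restriction to `T \ A`. -/
theorem stmt3 {F : Type*} [Field F] [Fintype F] [DecidableEq F]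
    {n r δ ℓ : ℕ} (hr : 1 ≤ r) (hδ : 2 ≤ δ)
    (C : Submodule F (Fin n → F))
    (S' : Fin ℓ → Finset (Fin n))
    (hcover : ∀ i : Fin n, ∃ j, i ∈ S' j)
    (hcard : ∀ j, (S' j).card ≤ r + δ - 1)
    (hloc : ∀ j, ∀ c ∈ C, (∃ i ∈ S' j, c i ≠ 0) →
        δ ≤ ((S' j).filter fun i => c i ≠ 0).card)
    (S : Finset (Fin n)) (Δ : ℕ) (hΔ : 1 ≤ Δ) (hΔS : Δ ≤ S.card) :
    ∃ A T : Finset (Fin n), A ⊆ S ∩ T ∧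
      A.card = (δ - 1) * (Δ / (r + δ - 1)) ∧
      (S ∩ T).card ≤ Δ ∧
      ∀ c₁ ∈ C, ∀ c₂ ∈ C, (∀ i ∈ T \ A, c₁ i = c₂ i) → ∀ i ∈ T, c₁ i = c₂ i := by
  have hH : (S ∩ (∅ : Finset (Fin n))).card + (δ - 1) * (Δ / (r + δ - 1)) +
      r * (((δ - 1) * (Δ / (r + δ - 1)) + δ - 2) / (δ - 1)) ≤ Δ := by
    have hm : ((δ - 1) * (Δ / (r + δ - 1)) + δ - 2) / (δ - 1) = Δ / (r + δ - 1) := by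
      have h1 : (δ - 1) * (Δ / (r + δ - 1)) + δ - 2
          = (δ - 1) * (Δ / (r + δ - 1)) + (δ - 2) := by omega
      have h2 : (δ - 2) / (δ - 1) = 0 := Nat.div_eq_of_lt (by omega)
      rw [h1, Nat.mul_add_div (by omega), h2, Nat.add_zero]
    rw [Finset.inter_empty, Finset.card_empty, hm]
    calc 0 + (δ - 1) * (Δ / (r + δ - 1)) + r * (Δ / (r + δ - 1))
        = ((δ - 1) + r) * (Δ / (r + δ - 1)) := by ring
      _ = (r + δ - 1) * (Δ / (r + δ - 1)) := by
          rw [show (δ - 1) + r = r + δ - 1 from by omega]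
      _ ≤ Δ := by
          rw [mul_comm]
          exact Nat.div_mul_le_self Δ _
  obtain ⟨A, T, _, hAsub, hAcard, hSTcard, hRfin⟩ :=
    aux_lrc hr hδ C S' hcover hcard hloc S Δ hΔS ((δ - 1) * (Δ / (r + δ - 1)))
      ∅ ∅ (by simp)
      (fun c₁ _ c₂ _ _ i hi => absurd hi (Finset.notMem_empty i)) hH
  exact ⟨A, T, hAsub, by simpa using hAcard, hSTcard, hRfin⟩
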